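/- Edge deletion formula for twin vertices: if e = {u,v} is an edge of a finite simple graph G with N[u] = N[v] (closed neighborhoods equal), then D_t(G, x) = D_t(G∖e, x) + x^2 · D_t(G ∖ N[u], x). -/

import Mathlib

open Polynomial Finset

/-- `D` is a total dominating set of `G`: every vertex has a neighbor in `D`. -/
def isTDS {V : Type*} (G : SimpleGraph V) (D : Finset V) : Prop :=
  ∀ v : V, ∃ u ∈ D, G.Adj v u

/-- The total domination polynomial of `G` (with integer coefficients). -/
noncomputable def tdPoly {V : Type*} [Finite V] (G : SimpleGraph V) : Polynomial ℤ :=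
  letI := Fintype.ofFinite V
  letI : DecidablePred (isTDS G) := Classical.decPred _
  ∑ D ∈ Finset.univ.filter (isTDS G), X ^ D.card

/-- `tdCount G i` is the number of total dominating sets of `G` of cardinality `i`. -/
noncomputable def tdCount {V : Type*} [Finite V] (G : SimpleGraph V) (i : ℕ) : ℕ :=
  letI := Fintype.ofFinite V
  letI : DecidablePred (fun D : Finset V => D.card = i ∧ isTDS G D) := Classical.decPred _
  (Finset.univ.filter (fun D : Finset V => D.card = i ∧ isTDS G D)).card

/-- The total domination number of `G`. -/
noncomputable def tdNum {V : Type*} (G : SimpleGraph V) : ℕ :=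
  sInf {k | ∃ D : Finset V, D.card = k ∧ isTDS G D}

lemma tdPoly_eq_sum {V : Type*} [Fintype V] (G : SimpleGraph V) [DecidablePred (isTDS G)] :
    tdPoly G = ∑ D ∈ Finset.univ.filter (isTDS G), X ^ D.card := by
  rw [tdPoly]
  congr!

theorem tdPoly_deleteEdge_twin {V : Type*} [Finite V] (G : SimpleGraph V) (u v : V)
    (huv : G.Adj u v)
    (h : G.neighborSet u ∪ {u} = G.neighborSet v ∪ {v}) :
    tdPoly G = tdPoly (G.deleteEdges {s(u, v)}) +
      X ^ 2 * tdPoly (G.induce ((G.neighborSet u ∪ {u})ᶜ)) := by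
  classical
  letI := Fintype.ofFinite V
  have hne : u ≠ v := huv.ne
  set S : Set V := (G.neighborSet u ∪ {u})ᶜ with hSdef
  set G' : SimpleGraph V := G.deleteEdges {s(u, v)} with hG'def
  have hSx : ∀ x : V, x ∈ S ↔ ¬ G.Adj u x ∧ x ≠ u := by
    intro x
    simp only [hSdef, Set.mem_compl_iff, Set.mem_union, Set.mem_singleton_iff,
      SimpleGraph.mem_neighborSet, not_or]
  have htwin : ∀ x : V, G.Adj u x ∨ x = u ↔ (G.Adj v x ∨ x = v) := by
    intro x
    have := Set.ext_iff.mp h x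
    simp only [Set.mem_union, Set.mem_singleton_iff, SimpleGraph.mem_neighborSet] at this
    tauto
  have hG'adj : ∀ a b : V, G'.Adj a b ↔ G.Adj a b ∧ ¬ (a = u ∧ b = v) ∧ ¬ (a = v ∧ b = u) := by
    intro a b
    rw [hG'def, SimpleGraph.deleteEdges_adj]
    simp only [Set.mem_singleton_iff, Sym2.eq_iff]
    tauto
  have hG'le : ∀ {a b : V}, G'.Adj a b → G.Adj a b := fun hab => ((hG'adj _ _).mp hab).1
  have hTDS' : ∀ D : Finset V, isTDS G' D → isTDS G D := by
    intro D hD w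
    obtain ⟨x, hx, hadj⟩ := hD w
    exact ⟨x, hx, hG'le hadj⟩
  have huS : u ∉ S := by simp [hSx]
  have hvS : v ∉ S := by simp [hSx, huv]
  -- key structural facts for D TDS of G but not of G'
  have key : ∀ D : Finset V, isTDS G D → ¬ isTDS G' D →
      u ∈ D ∧ v ∈ D ∧ (∀ x ∈ D, G.Adj u x → x = v) ∧ (∀ x ∈ D, G.Adj v x → x = u) := by
    intro D hD hD'
    rw [isTDS] at hD'
    push_neg at hD'
    obtain ⟨w, hw⟩ := hD'
    have hwspec : ∀ x ∈ D, G.Adj w x → (w = u ∧ x = v) ∨ (w = v ∧ x = u) := by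
      intro x hx hadj
      have := hw x hx
      rw [hG'adj] at this
      tauto
    obtain ⟨x0, hx0D, hx0⟩ := hD w
    have hwcase : w = u ∨ w = v := by
      rcases hwspec x0 hx0D hx0 with ⟨h1, _⟩ | ⟨h1, _⟩
      · exact Or.inl h1
      · exact Or.inr h1
    have keyu : ∀ x ∈ D, G.Adj u x → x = v := by
      rcases hwcase with hwu | hwv
      · intro x hx hadj
        rcases hwspec x hx (hwu ▸ hadj) with ⟨_, h2⟩ | ⟨h2, _⟩
        · exact h2
        · exact absurd (hwu.symm.trans h2) hne
      · have keyv : ∀ x ∈ D, G.Adj v x → x = u := by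
          intro x hx hadj
          rcases hwspec x hx (hwv ▸ hadj) with ⟨h2, _⟩ | ⟨_, h2⟩
          · exact absurd (hwv.symm.trans h2) hne.symm
          · exact h2
        intro x hx hadj
        have hx' : G.Adj v x ∨ x = v := (htwin x).mp (Or.inl hadj)
        rcases hx' with hadj' | rfl
        · have hxu := keyv x hx hadj'
          rw [hxu] at hadj
          exact absurd hadj (G.loopless.irrefl u)
        · rfl
    have keyv : ∀ x ∈ D, G.Adj v x → x = u := by
      intro x hx hadj
      have hx' : G.Adj u x ∨ x = u := (htwin x).mpr (Or.inl hadj)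
      rcases hx' with hadj' | rfl
      · have hxv := keyu x hx hadj'
        rw [hxv] at hadj
        exact absurd hadj (G.loopless.irrefl v)
      · rfl
    have hvD : v ∈ D := by
      obtain ⟨x, hx, hadj⟩ := hD u
      have := keyu x hx hadj
      subst this; exact hx
    have huD : u ∈ D := by
      obtain ⟨x, hx, hadj⟩ := hD v
      have := keyv x hx hadj
      subst this; exact hx
    exact ⟨huD, hvD, keyu, keyv⟩
  -- embedding
  let emb : ↥S ↪ V := ⟨Subtype.val, Subtype.val_injective⟩
  -- the main sum split
  have hmain : ∑ D ∈ univ.filter (isTDS G), (X : ℤ[X]) ^ D.card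
      = (∑ D ∈ univ.filter (isTDS G'), (X : ℤ[X]) ^ D.card)
        + ∑ D ∈ univ.filter (fun D => isTDS G D ∧ ¬ isTDS G' D), (X : ℤ[X]) ^ D.card := by
    rw [← Finset.sum_filter_add_sum_filter_not (univ.filter (isTDS G)) (isTDS G')]
    congr 1
    · apply Finset.sum_congr _ (fun _ _ => rfl)
      ext D
      simp only [mem_filter, mem_univ, true_and]
      exact ⟨fun ⟨_, h2⟩ => h2, fun h2 => ⟨hTDS' D h2, h2⟩⟩
    · apply Finset.sum_congr _ (fun _ _ => rfl)
      ext D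
      simp only [mem_filter, mem_univ, true_and]
  have hbij : ∑ D ∈ univ.filter (fun D => isTDS G D ∧ ¬ isTDS G' D), (X : ℤ[X]) ^ D.card
      = ∑ D' ∈ univ.filter (isTDS (G.induce S)), (X : ℤ[X]) ^ (D'.card + 2) := by
    apply Finset.sum_nbij' (i := fun D => D.subtype (· ∈ S))
      (j := fun D' => insert u (insert v (D'.map emb)))
    · -- hi : forward map lands in t
      intro D hD
      simp only [mem_filter, mem_univ, true_and] at hD ⊢
      obtain ⟨hDt, hDn⟩ := hD
      obtain ⟨huD, hvD, keyu, keyv⟩ := key D hDt hDn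
      intro w
      obtain ⟨x, hx, hadj⟩ := hDt ↑w
      have hwS : (w : V) ∈ S := w.2
      have hwu : ¬ G.Adj u ↑w := ((hSx _).mp hwS).1
      have hwnu : (w : V) ≠ u := ((hSx _).mp hwS).2
      -- x ∈ S
      have hxu : x ≠ u := by
        rintro rfl
        exact hwu hadj.symm
      have hxv : x ≠ v := by
        rintro rfl
        have : G.Adj u ↑w ∨ (w : V) = u := (htwin ↑w).mpr (Or.inl hadj.symm)
        rcases this with h1 | h1
        · exact hwu h1
        · exact hwnu h1
      have hxS : x ∈ S := by
        rw [hSx]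
        refine ⟨fun hadj' => ?_, hxu⟩
        exact hxv (keyu x hx hadj')
      refine ⟨⟨x, hxS⟩, ?_, ?_⟩
      · rw [Finset.mem_subtype]; exact hx
      · simpa using hadj
    · -- hj : backward map lands in s
      intro D' hD'
      simp only [mem_filter, mem_univ, true_and] at hD' ⊢
      constructor
      · intro w
        by_cases hwS : w ∈ S
        · obtain ⟨x, hx, hadj⟩ := hD' ⟨w, hwS⟩
          refine ⟨↑x, ?_, ?_⟩
          · simp only [Finset.mem_insert, Finset.mem_map]
            exact Or.inr (Or.inr ⟨x, hx, rfl⟩)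
          · simpa using hadj
        · have hw' : G.Adj u w ∨ w = u := by
            rw [hSx] at hwS
            tauto
          rcases hw' with hadj | rfl
          · by_cases hwv : w = v
            · subst hwv
              exact ⟨u, by simp, huv.symm⟩
            · exact ⟨u, by simp, hadj.symm⟩
          · exact ⟨v, by simp, huv⟩
      · -- not TDS of G' : u fails
        intro hcon
        obtain ⟨x, hx, hadj⟩ := hcon u
        have hadjG : G.Adj u x := hG'le hadj
        simp only [Finset.mem_insert, Finset.mem_map] at hx
        rcases hx with h1 | h1 | ⟨a, _, h1⟩
        · rw [h1] at hadjG
          exact (G.loopless.irrefl u) hadjG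
        · rw [hG'adj] at hadj
          exact hadj.2.1 ⟨rfl, h1⟩
        · rw [← h1] at hadjG
          exact ((hSx _).mp a.2).1 hadjG
    · -- left inverse
      intro D hD
      simp only [mem_filter, mem_univ, true_and] at hD
      obtain ⟨huD, hvD, keyu, keyv⟩ := key D hD.1 hD.2
      ext x
      simp only [Finset.mem_insert, Finset.mem_map, Finset.mem_subtype]
      constructor
      · rintro (h1 | h1 | ⟨a, ha, h1⟩)
        · rw [h1]; exact huD
        · rw [h1]; exact hvD
        · rw [← h1]; exact ha
      · intro hx
        by_cases hxu : x = u
        · exact Or.inl hxu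
        by_cases hxv : x = v
        · exact Or.inr (Or.inl hxv)
        have hxS : x ∈ S := by
          rw [hSx]
          exact ⟨fun hadj => hxv (keyu x hx hadj), hxu⟩
        exact Or.inr (Or.inr ⟨⟨x, hxS⟩, by simpa using hx, rfl⟩)
    · -- right inverse
      intro D' hD'
      ext a
      simp only [Finset.mem_subtype, Finset.mem_insert, Finset.mem_map]
      constructor
      · rintro (ha | ha | ⟨b, hb, hba⟩)
        · exact absurd (ha ▸ a.2) huS
        · exact absurd (ha ▸ a.2) hvS
        · have : b = a := Subtype.ext hba
          exact this ▸ hb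
      · intro ha
        exact Or.inr (Or.inr ⟨a, ha, rfl⟩)
    · -- cards
      intro D hD
      simp only [mem_filter, mem_univ, true_and] at hD
      obtain ⟨huD, hvD, keyu, keyv⟩ := key D hD.1 hD.2
      congr 1
      -- D.card = (D.subtype _).card + 2
      have hDeq : D = insert u (insert v ((D.subtype (· ∈ S)).map emb)) := by
        ext x
        simp only [Finset.mem_insert, Finset.mem_map, Finset.mem_subtype]
        constructor
        · intro hx
          by_cases hxu : x = u
          · exact Or.inl hxu
          by_cases hxv : x = v
          · exact Or.inr (Or.inl hxv)
          have hxS : x ∈ S := by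
            rw [hSx]
            exact ⟨fun hadj => hxv (keyu x hx hadj), hxu⟩
          exact Or.inr (Or.inr ⟨⟨x, hxS⟩, by simpa using hx, rfl⟩)
        · rintro (h1 | h1 | ⟨a, ha, h1⟩)
          · rw [h1]; exact huD
          · rw [h1]; exact hvD
          · rw [← h1]; exact (by simpa using ha : (a : V) ∈ D)
      have humem : u ∉ insert v ((D.subtype (· ∈ S)).map emb) := by
        simp only [Finset.mem_insert, Finset.mem_map, Finset.mem_subtype]
        rintro (h1 | ⟨a, _, h1⟩)
        · exact hne h1
        · exact huS (h1 ▸ a.2)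
      have hvmem : v ∉ (D.subtype (· ∈ S)).map emb := by
        simp only [Finset.mem_map, Finset.mem_subtype]
        rintro ⟨a, _, h1⟩
        exact hvS (h1 ▸ a.2)
      conv_lhs => rw [hDeq]
      rw [Finset.card_insert_of_notMem humem, Finset.card_insert_of_notMem hvmem,
        Finset.card_map]
  have hfin : ∑ D' ∈ univ.filter (isTDS (G.induce S)), (X : ℤ[X]) ^ (D'.card + 2)
      = X ^ 2 * ∑ D' ∈ univ.filter (isTDS (G.induce S)), (X : ℤ[X]) ^ D'.card := by
    rw [Finset.mul_sum]
    exact Finset.sum_congr rfl fun D' _ => by ring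
  rw [tdPoly_eq_sum G, tdPoly_eq_sum G', tdPoly_eq_sum (G.induce S), hmain, hbij, hfin]
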